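/- arXiv:1602.06244 — 3 statements merged into one kernel-verified Lean document; each statement's English description precedes it below -/
import Mathlib

section
/- Let F be a number field with set of archimedean embeddings Σ, and let r = (r_σ) ∈ Z[Σ]. Then r can be realized as the infinity type of an (arithmetic) Hecke character of F if and only if there exists a positive integer n such that ∏_{σ∈Σ} σ(ε)^{n r_σ} = 1 for every unit ε of the ring of integers of F. -/
open NumberField
open scoped nonZeroDivisors

set_option maxHeartbeats 1000000
set_option synthInstance.maxHeartbeats 400000

namespace HeckeWeilAux


lemma rat_int_of_isIntegral {q : ℚ} (h : IsIntegral ℤ ((q : ℂ))) : ∃ z : ℤ, (z : ℚ) = q := by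
  have h1 : IsIntegral ℤ q := by
    rwa [show ((q : ℂ)) = algebraMap ℚ ℂ q from rfl,
      isIntegral_algebraMap_iff (algebraMap ℚ ℂ).injective] at h
  exact IsIntegrallyClosed.isIntegral_iff.mp h1

/-- `x` is an algebraic integer congruent to 1 mod `M`. -/
def Nr (M : ℕ) (x : ℂ) : Prop := IsIntegral ℤ x ∧ IsIntegral ℤ ((x - 1) / (M : ℂ))

lemma natCast_isIntegral (M : ℕ) : IsIntegral ℤ ((M : ℂ)) := by
  have : IsIntegral ℤ (algebraMap ℤ ℂ (M : ℤ)) := isIntegral_algebraMap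
  simpa using this

lemma Nr_one (M : ℕ) : Nr M 1 := by
  refine ⟨isIntegral_one, ?_⟩
  simp [Nr, isIntegral_zero]

lemma Nr_mul {M : ℕ} (hM : (M : ℂ) ≠ 0) {x y : ℂ} (hx : Nr M x) (hy : Nr M y) :
    Nr M (x * y) := by
  refine ⟨hx.1.mul hy.1, ?_⟩
  have key : (x * y - 1) / (M : ℂ) =
      (M : ℂ) * ((x - 1) / (M : ℂ)) * ((y - 1) / (M : ℂ))
        + (x - 1) / (M : ℂ) + (y - 1) / (M : ℂ) := by
    field_simp
    ring
  rw [key]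
  exact (((natCast_isIntegral M).mul hx.2).mul hy.2).add hx.2 |>.add hy.2

lemma Nr_inv {M : ℕ} (hM : (M : ℂ) ≠ 0) {x : ℂ} (hx0 : x ≠ 0)
    (hxi : IsIntegral ℤ x⁻¹) (hx : Nr M x) : Nr M x⁻¹ := by
  refine ⟨hxi, ?_⟩
  have key : (x⁻¹ - 1) / (M : ℂ) = -(x⁻¹ * ((x - 1) / (M : ℂ))) := by
    field_simp
    ring
  rw [key]
  exact (hxi.mul hx.2).neg

lemma Nr_pow {M : ℕ} (hM : (M : ℂ) ≠ 0) {x : ℂ} (hx : Nr M x) (k : ℕ) : Nr M (x ^ k) := by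
  induction k with
  | zero => simpa using Nr_one M
  | succ k ih => rw [pow_succ]; exact Nr_mul hM ih hx

lemma Nr_zpow {M : ℕ} (hM : (M : ℂ) ≠ 0) {x : ℂ} (hx0 : x ≠ 0)
    (hxi : IsIntegral ℤ x⁻¹) (hx : Nr M x) (k : ℤ) : Nr M (x ^ k) := by
  cases k with
  | ofNat k => simpa using Nr_pow hM hx k
  | negSucc k =>
      rw [zpow_negSucc]
      exact Nr_inv hM (pow_ne_zero _ hx0) (by simpa [inv_pow] using hxi.pow (k+1))
        (Nr_pow hM hx (k+1))

lemma eq_one_of_Nr_pow {n : ℕ} (hn : 0 < n) {ζ : ℂ} (hζ : Nr (n + 1) ζ)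
    (h1 : ζ ^ n = 1) : ζ = 1 := by
  by_contra hne
  have hM : ((n + 1 : ℕ) : ℂ) ≠ 0 := Nat.cast_ne_zero.mpr (Nat.succ_ne_zero n)
  have hsum : ∑ k ∈ Finset.range n, ζ ^ k = 0 := by
    have := geom_sum_eq hne n
    rw [this, h1]
    simp
  set Y : ℂ := ∑ k ∈ Finset.range n, (ζ ^ k - 1) / ((n + 1 : ℕ) : ℂ) with hY
  have hYint : IsIntegral ℤ Y :=
    IsIntegral.sum _ (fun k _ => (Nr_pow hM hζ k).2)
  have hsplit : ∑ k ∈ Finset.range n, ζ ^ k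
      = (n : ℂ) + ((n + 1 : ℕ) : ℂ) * Y := by
    rw [hY, Finset.mul_sum]
    have : ∀ k ∈ Finset.range n, ζ ^ k = 1 + ((n + 1 : ℕ) : ℂ) * ((ζ ^ k - 1) / ((n+1:ℕ) : ℂ)) := by
      intro k _
      rw [mul_comm (((n+1 : ℕ)):ℂ) _, div_mul_cancel₀ _ hM]
      ring
    rw [Finset.sum_congr rfl this]
    rw [Finset.sum_add_distrib]
    simp [Finset.mul_sum]
  have hYval : Y = -((n : ℂ) / ((n + 1 : ℕ) : ℂ)) := by
    rw [hsum] at hsplit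
    rw [eq_neg_iff_add_eq_zero]
    have hM' : ((n:ℂ)+1) ≠ 0 := by push_cast at hM; exact hM
    push_cast at hsplit ⊢
    field_simp
    linear_combination -hsplit
  have hq : ((( -((n : ℚ) / ((n+1 : ℕ) : ℚ))) : ℚ) : ℂ) = Y := by
    rw [hYval]; push_cast; ring
  obtain ⟨z, hz⟩ := rat_int_of_isIntegral (q := -((n : ℚ) / ((n+1 : ℕ) : ℚ))) (by rw [hq]; exact hYint)
  have hzq : (z : ℚ) * ((n + 1 : ℕ) : ℚ) = -(n : ℚ) := by
    rw [hz]
    field_simp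
  have hzint : z * ((n+1 : ℕ) : ℤ) = -(n : ℤ) := by exact_mod_cast hzq
  have hdvd : ((n+1 : ℕ) : ℤ) ∣ (n : ℤ) := ⟨-z, by linarith [hzint]⟩
  have : (n+1 : ℕ) ∣ n := Int.ofNat_dvd.mp hdvd
  have := Nat.le_of_dvd hn this
  omega

variable {F : Type*} [Field F] [NumberField F]

noncomputable def chi (r : (F →+* ℂ) → ℤ) (x : F) : ℂ := ∏ σ : F →+* ℂ, σ x ^ r σ

lemma chi_mul (r : (F →+* ℂ) → ℤ) (x y : F) : chi r (x * y) = chi r x * chi r y := by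
  unfold chi
  rw [← Finset.prod_mul_distrib]
  exact Finset.prod_congr rfl fun σ _ => by rw [map_mul, mul_zpow]

lemma chi_one (r : (F →+* ℂ) → ℤ) : chi (F := F) r 1 = 1 := by simp [chi]

lemma chi_ne_zero (r : (F →+* ℂ) → ℤ) {x : F} (hx : x ≠ 0) : chi r x ≠ 0 := by
  unfold chi
  rw [Finset.prod_ne_zero_iff]
  intro σ _
  exact zpow_ne_zero _ ((map_ne_zero σ).mpr hx)

lemma chi_unit_eq_one (r : (F →+* ℂ) → ℤ) {n : ℕ} (hn : 0 < n)
    (h : ∀ ε : (𝓞 F)ˣ, ∏ σ : F →+* ℂ, σ (algebraMap (𝓞 F) F (ε : 𝓞 F)) ^ ((n : ℤ) * r σ) = 1)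
    (u : (𝓞 F)ˣ) (hu : (u : 𝓞 F) - 1 ∈ Ideal.span {((n + 1 : ℕ) : 𝓞 F)}) :
    chi r (algebraMap (𝓞 F) F (u : 𝓞 F)) = 1 := by
  have hM : ((n + 1 : ℕ) : ℂ) ≠ 0 := Nat.cast_ne_zero.mpr (Nat.succ_ne_zero n)
  obtain ⟨w, hw⟩ := Ideal.mem_span_singleton'.mp hu
  have hfac : ∀ σ : F →+* ℂ, Nr (n + 1) (σ (algebraMap (𝓞 F) F (u : 𝓞 F))) := by
    intro σ
    refine ⟨((u : 𝓞 F).isIntegral_coe).map σ.toIntAlgHom, ?_⟩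
    have heq : σ (algebraMap (𝓞 F) F (u : 𝓞 F)) - 1
        = ((n + 1 : ℕ) : ℂ) * σ (algebraMap (𝓞 F) F w) := by
      have h2 := congrArg (fun t => σ (algebraMap (𝓞 F) F t)) hw
      simp only [map_mul, map_natCast, map_sub, map_one] at h2
      push_cast at h2 ⊢
      linear_combination -h2
    rw [heq, mul_div_cancel_left₀ _ hM]
    exact (w.isIntegral_coe).map σ.toIntAlgHom
  have hnz : ∀ σ : F →+* ℂ, σ (algebraMap (𝓞 F) F (u : 𝓞 F)) ≠ 0 := by
    intro σ
    refine (map_ne_zero σ).mpr ?_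
    simp only [ne_eq, map_eq_zero]
    exact RingOfIntegers.coe_ne_zero_iff.mpr (Units.ne_zero u)
  have hinv : ∀ σ : F →+* ℂ, IsIntegral ℤ (σ (algebraMap (𝓞 F) F (u : 𝓞 F)))⁻¹ := by
    intro σ
    have hmul : σ (algebraMap (𝓞 F) F ((u⁻¹ : (𝓞 F)ˣ) : 𝓞 F))
        * σ (algebraMap (𝓞 F) F (u : 𝓞 F)) = 1 := by
      rw [← map_mul, ← map_mul]
      have : ((u⁻¹ : (𝓞 F)ˣ) : 𝓞 F) * (u : 𝓞 F) = 1 := by exact_mod_cast u.inv_mul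
      rw [this, map_one, map_one]
    rw [← eq_inv_of_mul_eq_one_left hmul]
    exact (((u⁻¹ : (𝓞 F)ˣ) : 𝓞 F).isIntegral_coe).map σ.toIntAlgHom
  have hNr : Nr (n + 1) (chi r (algebraMap (𝓞 F) F (u : 𝓞 F))) := by
    unfold chi
    refine Finset.prod_induction _ (Nr (n + 1)) (fun a b ha hb => Nr_mul hM ha hb)
      (Nr_one _) (fun σ _ => Nr_zpow hM (hnz σ) (hinv σ) (hfac σ) (r σ))
  have hpow : chi r (algebraMap (𝓞 F) F (u : 𝓞 F)) ^ n = 1 := by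
    unfold chi
    rw [← Finset.prod_pow]
    rw [Finset.prod_congr rfl (fun σ _ => by
      rw [← zpow_natCast (σ (algebraMap (𝓞 F) F (u : 𝓞 F)) ^ r σ) n, ← zpow_mul, mul_comm])]
    exact h u
  exact eq_one_of_Nr_pow hn hNr hpow


noncomputable instance : RootableBy ℂˣ ℕ :=
  rootableByOfPowLeftSurj _ _ (fun {k} hk z => by
    refine ⟨Units.mk0 (Complex.exp (Complex.log (z : ℂ) / (k : ℂ))) (Complex.exp_ne_zero _), ?_⟩
    ext
    simp only [Units.val_pow_eq_pow_val, Units.val_mk0]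
    rw [← Complex.exp_nat_mul, mul_div_cancel₀ _ (Nat.cast_ne_zero.mpr hk)]
    exact Complex.exp_log (Units.ne_zero z))

noncomputable instance : RootableBy ℂˣ ℤ := Group.rootableByIntOfRootableByNat ℂˣ

noncomputable instance instDivAdd {A : Type*} [CommGroup A] [RootableBy A ℤ] :
    DivisibleBy (Additive A) ℤ where
  div a n := Additive.ofMul (RootableBy.root (Additive.toMul a) n)
  div_zero a := by
    simp only [RootableBy.root_zero]
    rfl
  div_cancel {n} a hn := by
    change Additive.ofMul ((RootableBy.root (Additive.toMul a) n) ^ n) = a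
    rw [RootableBy.root_cancel _ hn]
    rfl


universe u

noncomputable instance : RootableBy (ULift.{u} ℂˣ) ℤ :=
  Group.rootableByIntOfRootableByNat _

lemma exists_monoidHom_extension {G : Type u} [CommGroup G] (H : Subgroup G) (ψ : H →* ℂˣ) :
    ∃ Ψ : G →* ℂˣ, ∀ x : H, Ψ (x : G) = ψ x := by
  have inj : Module.Injective ℤ (Additive (ULift.{u} ℂˣ)) :=
    (Module.Baer.of_divisible _).injective
  have hinj : Function.Injective ((MonoidHom.toAdditive H.subtype).toIntLinearMap) := by
    intro a b hab
    have : (H.subtype (Additive.toMul a) : G) = (H.subtype (Additive.toMul b) : G) :=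
      congrArg Additive.toMul hab
    exact Subtype.ext this
  obtain ⟨L, hL⟩ := inj.out (X := Additive H) (Y := Additive G)
    (MonoidHom.toAdditive H.subtype).toIntLinearMap hinj
    (MonoidHom.toAdditive ((MulEquiv.ulift.symm.toMonoidHom).comp ψ)).toIntLinearMap
  refine ⟨(MulEquiv.ulift.toMonoidHom).comp
    (MonoidHom.toAdditive.symm L.toAddMonoidHom), fun x => ?_⟩
  have h2 := hL (Additive.ofMul x)
  have h3 : L (Additive.ofMul (x : G)) = Additive.ofMul (MulEquiv.ulift.symm (ψ x)) := h2
  show MulEquiv.ulift (Additive.toMul (L (Additive.ofMul (x : G)))) = ψ x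
  rw [h3]
  exact MulEquiv.apply_symm_apply _ _

lemma exists_range_lift {A B C : Type*} [CommGroup A] [CommGroup B] [CommGroup C]
    (j : A →* B) (c : A →* C) (hker : ∀ a, j a = 1 → c a = 1) :
    ∃ ψ : j.range →* C, ∀ a : A, ψ ⟨j a, ⟨a, rfl⟩⟩ = c a := by
  classical
  have key : ∀ a b : A, j a = j b → c a = c b := by
    intro a b hab
    have h1 : j (a * b⁻¹) = 1 := by rw [map_mul, map_inv, hab, mul_inv_cancel]
    have h2 := hker _ h1
    rw [map_mul, map_inv] at h2
    have := mul_eq_one_iff_eq_inv.mp h2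
    rwa [inv_inv] at this
  have hch : ∀ h : j.range, ∃ a : A, j a = (h : B) := fun h => h.2
  refine ⟨{ toFun := fun h => c (Classical.choose (hch h)),
            map_one' := ?_, map_mul' := ?_ }, ?_⟩
  · have hc := Classical.choose_spec (hch 1)
    exact hker _ (by rw [hc]; rfl)
  · intro x y
    have hx := Classical.choose_spec (hch x)
    have hy := Classical.choose_spec (hch y)
    have hxy := Classical.choose_spec (hch (x * y))
    have : j (Classical.choose (hch (x * y)))
        = j (Classical.choose (hch x) * Classical.choose (hch y)) := by
      rw [map_mul, hx, hy, hxy]; rfl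
    show c (Classical.choose (hch (x * y)))
        = c (Classical.choose (hch x)) * c (Classical.choose (hch y))
    rw [key _ _ this, map_mul]
  · intro a
    have ha := Classical.choose_spec (hch ⟨j a, ⟨a, rfl⟩⟩)
    exact key _ _ (by rw [ha])

end HeckeWeilAux

/-- `r ∈ ℤ[Σ]` is the infinity type of an arithmetic (narrow) Hecke character of `F`, phrased in
classical ideal-theoretic terms: there is a modulus `f` and a function `φ` on ideals of `𝓞 F`,
multiplicative and nonvanishing on ideals coprime to `f`, such that on principal ideals generated
by totally positive `α ≡ 1 (mod f)` it takes the value `∏ σ, σ(α) ^ r_σ`. -/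
def IsInfinityType (F : Type*) [Field F] [NumberField F] (r : (F →+* ℂ) → ℤ) : Prop :=
  ∃ f : Ideal (𝓞 F), f ≠ ⊥ ∧
    ∃ φ : Ideal (𝓞 F) → ℂ,
      (∀ I J : Ideal (𝓞 F), IsCoprime I f → IsCoprime J f → φ (I * J) = φ I * φ J) ∧
      (∀ I : Ideal (𝓞 F), IsCoprime I f → φ I ≠ 0) ∧
      (∀ α : 𝓞 F, α ≠ 0 → α - 1 ∈ f →
        (∀ τ : F →+* ℝ, 0 < τ (algebraMap (𝓞 F) F α)) →
        φ (Ideal.span {α}) = ∏ σ : F →+* ℂ, σ (algebraMap (𝓞 F) F α) ^ r σ)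

namespace HeckeWeilAux

variable {F : Type*} [Field F] [NumberField F]

def RayElt (f : Ideal (𝓞 F)) (a : 𝓞 F) : Prop :=
  a ≠ 0 ∧ a - 1 ∈ f ∧ ∀ τ : F →+* ℝ, 0 < τ (algebraMap (𝓞 F) F a)

lemma RayElt.one (f : Ideal (𝓞 F)) : RayElt f 1 :=
  ⟨one_ne_zero, by simp, fun τ => by simp⟩

lemma RayElt.mul {f : Ideal (𝓞 F)} {a b : 𝓞 F} (ha : RayElt f a) (hb : RayElt f b) :
    RayElt f (a * b) := by
  refine ⟨mul_ne_zero ha.1 hb.1, ?_, fun τ => ?_⟩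
  · have heq : a * b - 1 = a * (b - 1) + (a - 1) := by ring
    rw [heq]
    exact Ideal.add_mem f (Ideal.mul_mem_left f _ hb.2.1) ha.2.1
  · rw [map_mul, map_mul]
    exact mul_pos (ha.2.2 τ) (hb.2.2 τ)

def rayGroup (f : Ideal (𝓞 F)) : Subgroup Fˣ where
  carrier := {x : Fˣ | ∃ a b : 𝓞 F, RayElt f a ∧ RayElt f b ∧
      (x : F) * algebraMap (𝓞 F) F b = algebraMap (𝓞 F) F a}
  one_mem' := ⟨1, 1, RayElt.one f, RayElt.one f, by simp⟩
  mul_mem' := by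
    rintro x y ⟨a, b, ha, hb, hx⟩ ⟨c, d, hc, hd, hy⟩
    refine ⟨a * c, b * d, ha.mul hc, hb.mul hd, ?_⟩
    rw [Units.val_mul, map_mul, map_mul]
    linear_combination ((y : F) * algebraMap (𝓞 F) F d) * hx + (algebraMap (𝓞 F) F a) * hy
  inv_mem' := by
    rintro x ⟨a, b, ha, hb, hx⟩
    refine ⟨b, a, hb, ha, ?_⟩
    rw [Units.val_inv_eq_inv_val]
    have hx0 : (x : F) ≠ 0 := Units.ne_zero x
    field_simp
    linear_combination -hx

theorem backward (r : (F →+* ℂ) → ℤ) {n : ℕ} (hn : 0 < n)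
    (h : ∀ ε : (𝓞 F)ˣ, ∏ σ : F →+* ℂ, σ (algebraMap (𝓞 F) F (ε : 𝓞 F)) ^ ((n : ℤ) * r σ) = 1) :
    IsInfinityType F r := by
  classical
  set f : Ideal (𝓞 F) := Ideal.span {((n + 1 : ℕ) : 𝓞 F)} with hfdef
  have hfbot : f ≠ ⊥ := by
    rw [hfdef, Ne, Ideal.span_singleton_eq_bot]
    exact Nat.cast_ne_zero.mpr (Nat.succ_ne_zero n)
  have hftop : f ≠ ⊤ := by
    rw [hfdef, Ne, Ideal.span_singleton_eq_top]
    intro hu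
    obtain ⟨v, hv⟩ := hu.exists_right_inv
    have hcard : 0 < Fintype.card (F →+* ℂ) := by
      rw [NumberField.Embeddings.card F ℂ]
      exact Module.finrank_pos
    obtain ⟨σ⟩ := Fintype.card_pos_iff.mp hcard
    have hint : IsIntegral ℤ (σ (algebraMap (𝓞 F) F v)) := v.isIntegral_coe.map σ.toIntAlgHom
    have hval : σ (algebraMap (𝓞 F) F v) = ((((n + 1 : ℕ) : ℚ)⁻¹ : ℚ) : ℂ) := by
      have h2 := congrArg (fun t => σ (algebraMap (𝓞 F) F t)) hv
      simp only [map_mul, map_natCast, map_one] at h2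
      have hMne : ((n : ℂ) + 1) ≠ 0 := by
        have h3 : ((n + 1 : ℕ) : ℂ) ≠ 0 := Nat.cast_ne_zero.mpr (Nat.succ_ne_zero n)
        push_cast at h3
        exact h3
      push_cast at h2 ⊢
      field_simp
      linear_combination h2
    obtain ⟨z, hz⟩ := rat_int_of_isIntegral (hval ▸ hint)
    have hq : (z : ℚ) * ((n + 1 : ℕ) : ℚ) = 1 := by
      rw [hz]
      field_simp
    have hzz : z * ((n + 1 : ℕ) : ℤ) = 1 := by exact_mod_cast hq
    have hdvd : ((n + 1 : ℕ) : ℤ) ∣ 1 := ⟨z, by rw [← hzz]; ring⟩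
    have := Int.le_of_dvd one_pos hdvd
    omega
  -- the homomorphisms
  set j : rayGroup (F := F) f →* (FractionalIdeal (𝓞 F)⁰ F)ˣ :=
    (toPrincipalIdeal (𝓞 F) F).comp (rayGroup f).subtype with hjdef
  set c : rayGroup (F := F) f →* ℂˣ :=
    { toFun := fun t => Units.mk0 (chi r ((t : Fˣ) : F)) (chi_ne_zero r (Units.ne_zero _)),
      map_one' := Units.ext (by simpa using chi_one r),
      map_mul' := fun x y => Units.ext (by push_cast; exact chi_mul r _ _) } with hcdef
  have hker : ∀ t, j t = 1 → c t = 1 := by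
    intro t ht
    have hsp : FractionalIdeal.spanSingleton (𝓞 F)⁰ ((t : Fˣ) : F) = 1 := by
      have h2 := congrArg Units.val ht
      rwa [hjdef, MonoidHom.comp_apply, coe_toPrincipalIdeal] at h2
    have hspi : FractionalIdeal.spanSingleton (𝓞 F)⁰ (((t : Fˣ) : F)⁻¹) = 1 := by
      have h2 := congrArg Units.val (map_inv j t ▸ congrArg (·⁻¹) ht)
      rw [hjdef, MonoidHom.comp_apply, coe_toPrincipalIdeal] at h2
      simpa using h2
    obtain ⟨u, hu⟩ := (FractionalIdeal.mem_one_iff (𝓞 F)⁰).mp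
      (hsp ▸ FractionalIdeal.mem_spanSingleton_self (𝓞 F)⁰ ((t : Fˣ) : F))
    obtain ⟨v, hv⟩ := (FractionalIdeal.mem_one_iff (𝓞 F)⁰).mp
      (hspi ▸ FractionalIdeal.mem_spanSingleton_self (𝓞 F)⁰ (((t : Fˣ) : F)⁻¹))
    have huv : u * v = 1 := by
      apply RingOfIntegers.coe_injective (K := F)
      push_cast [map_mul, hu, hv]
      field_simp
    obtain ⟨a, b, ha, hb, habt⟩ := t.2
    have hub : u * b = a := by
      apply RingOfIntegers.coe_injective (K := F)
      push_cast [map_mul, hu]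
      exact habt
    have humem : (u : 𝓞 F) - 1 ∈ f := by
      have heq : u - 1 = ((u * b - 1) - (b - 1)) - (u - 1) * (b - 1) := by ring
      rw [heq, hub]
      exact Ideal.sub_mem f (Ideal.sub_mem f ha.2.1 hb.2.1)
        (Ideal.mul_mem_left f _ hb.2.1)
    have := chi_unit_eq_one r hn h (Units.mkOfMulEqOne u v huv) humem
    rw [Units.val_mkOfMulEqOne, hu] at this
    rw [hcdef]
    exact Units.ext (by simpa using this)
  obtain ⟨ψ, hψ⟩ := exists_range_lift j c hker
  obtain ⟨Ψ, hΨ⟩ := exists_monoidHom_extension j.range ψ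
  have hnebot : ∀ I : Ideal (𝓞 F), I ≠ ⊥ → (I : FractionalIdeal (𝓞 F)⁰ F) ≠ 0 := by
    intro I hI
    rwa [Ne, FractionalIdeal.coeIdeal_eq_zero]
  have hcop : ∀ I : Ideal (𝓞 F), IsCoprime I f → I ≠ ⊥ := by
    intro I hI hbot
    rw [hbot] at hI
    have := Ideal.isCoprime_iff_sup_eq.mp hI
    rw [bot_sup_eq] at this
    exact hftop this
  refine ⟨f, hfbot, fun I =>
    if hI : I = ⊥ then 1 else (Ψ (Units.mk0 _ (hnebot I hI)) : ℂ), ?_, ?_, ?_⟩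
  · intro I J hI hJ
    have hIb := hcop I hI
    have hJb := hcop J hJ
    have hIJ : I * J ≠ ⊥ := by
      rw [Ne, Ideal.mul_eq_bot]
      tauto
    beta_reduce
    rw [dif_neg hIJ, dif_neg hIb, dif_neg hJb, ← Units.val_mul, ← map_mul]
    congr 2
    exact Units.ext (by simp [FractionalIdeal.coeIdeal_mul])
  · intro I hI
    beta_reduce
    rw [dif_neg (hcop I hI)]
    exact Units.ne_zero _
  · intro α hα hαf hαpos
    have hsb : Ideal.span {α} ≠ (⊥ : Ideal (𝓞 F)) := by
      rwa [Ne, Ideal.span_singleton_eq_bot]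
    beta_reduce
    rw [dif_neg hsb]
    set xu : Fˣ := Units.mk0 (algebraMap (𝓞 F) F α)
      (by rwa [Ne, map_eq_zero_iff _ (RingOfIntegers.coe_injective (K := F))]) with hxu
    have hmem : xu ∈ rayGroup (F := F) f := ⟨α, 1, ⟨hα, hαf, hαpos⟩, RayElt.one f, by simp [hxu]⟩
    set t : rayGroup (F := F) f := ⟨xu, hmem⟩ with htdef
    have hunit : Units.mk0 ((Ideal.span {α} : Ideal (𝓞 F)) : FractionalIdeal (𝓞 F)⁰ F)
        (hnebot _ hsb) = j t := by
      refine Units.ext ?_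
      rw [hjdef, MonoidHom.comp_apply, coe_toPrincipalIdeal]
      simp [FractionalIdeal.coeIdeal_span_singleton, htdef, hxu]
    rw [hunit, show j t = ((⟨j t, ⟨t, rfl⟩⟩ : j.range) : (FractionalIdeal (𝓞 F)⁰ F)ˣ) from rfl,
      hΨ, hψ]
    rw [hcdef]
    exact rfl

noncomputable def sgnHom : ℝˣ →* ℤˣ where
  toFun x := if (0 : ℝ) < (x : ℝ) then 1 else -1
  map_one' := by norm_num
  map_mul' a b := by
    rcases lt_or_gt_of_ne (Units.ne_zero a) with ha | ha <;>
      rcases lt_or_gt_of_ne (Units.ne_zero b) with hb | hb <;>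
      simp only [Units.val_mul] <;>
      [ rw [if_pos (mul_pos_of_neg_of_neg ha hb), if_neg (not_lt.mpr ha.le),
          if_neg (not_lt.mpr hb.le)];
        rw [if_neg (not_lt.mpr (mul_nonpos_of_nonpos_of_nonneg ha.le hb.le)),
          if_neg (not_lt.mpr ha.le), if_pos hb];
        rw [if_neg (not_lt.mpr (mul_nonpos_of_nonneg_of_nonpos ha.le hb.le)),
          if_pos ha, if_neg (not_lt.mpr hb.le)];
        rw [if_pos (mul_pos ha hb), if_pos ha, if_pos hb]] <;> norm_num

theorem forward (r : (F →+* ℂ) → ℤ) (h : IsInfinityType F r) :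
    ∃ n : ℕ, 0 < n ∧ ∀ ε : (𝓞 F)ˣ,
      ∏ σ : F →+* ℂ, σ (algebraMap (𝓞 F) F (ε : 𝓞 F)) ^ ((n : ℤ) * r σ) = 1 := by
  classical
  obtain ⟨f, hf, φ, hmul, hnz, hval⟩ := h
  haveI hfin : Finite (𝓞 F ⧸ f) := by
    refine (Ideal.absNorm_ne_zero_iff f).mp ?_
    rwa [Ne, Ideal.absNorm_eq_zero_iff]
  haveI : Finite (F →+* ℝ) := by
    refine Finite.of_injective (fun τ => (Complex.ofRealHom.comp τ : F →+* ℂ)) ?_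
    intro a b hab
    ext x
    exact Complex.ofReal_injective (by
      have := congrArg (fun g : F →+* ℂ => g x) hab
      simpa using this)
  set K := ((𝓞 F ⧸ f)ˣ × ((F →+* ℝ) → ℤˣ)) with hK
  set g1 : (𝓞 F)ˣ →* (𝓞 F ⧸ f)ˣ := Units.map (Ideal.Quotient.mk f).toMonoidHom with hg1
  set g2 : (𝓞 F)ˣ →* ((F →+* ℝ) → ℤˣ) :=
    { toFun := fun ε τ => sgnHom (Units.map (τ.comp (algebraMap (𝓞 F) F)).toMonoidHom ε)
      map_one' := by ext τ; simp
      map_mul' := fun a b => by ext τ; simp } with hg2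
  set g : (𝓞 F)ˣ →* K := g1.prod g2 with hg
  haveI : Finite ((F →+* ℝ) → ℤˣ) := Pi.finite
  haveI hKfin : Finite K := Finite.instProd
  haveI hKne : Nonempty K := ⟨1⟩
  refine ⟨Nat.card K, Nat.card_pos, fun ε => ?_⟩
  have hgn : g ε ^ Nat.card K = 1 := pow_card_eq_one'
  set n := Nat.card K with hn
  set δ : (𝓞 F)ˣ := ε ^ n with hδ
  have hgδ : g δ = 1 := by rw [hδ, map_pow, hgn]
  have h1 : (δ : 𝓞 F) - 1 ∈ f := by
    have h2 : g1 δ = 1 := congrArg Prod.fst hgδ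
    have h3 : Ideal.Quotient.mk f ((δ : 𝓞 F)) = 1 := Units.ext_iff.mp h2
    exact Ideal.Quotient.eq.mp (h3.trans (map_one (Ideal.Quotient.mk f)).symm)
  have h4 : ∀ τ : F →+* ℝ, 0 < τ (algebraMap (𝓞 F) F (δ : 𝓞 F)) := by
    intro τ
    have h2 : g2 δ τ = 1 := congrArg (fun p : K => p.2 τ) hgδ
    by_contra hneg
    have : sgnHom (Units.map (τ.comp (algebraMap (𝓞 F) F)).toMonoidHom δ) = -1 := by
      rw [show sgnHom (Units.map (τ.comp (algebraMap (𝓞 F) F)).toMonoidHom δ)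
          = (if (0:ℝ) < τ (algebraMap (𝓞 F) F (δ : 𝓞 F)) then (1 : ℤˣ) else -1) from rfl,
        if_neg hneg]
    rw [show g2 δ τ = sgnHom (Units.map (τ.comp (algebraMap (𝓞 F) F)).toMonoidHom δ) from rfl,
      this] at h2
    exact absurd h2 (by decide)
  have h5 := hval ((δ : 𝓞 F)) (Units.ne_zero δ) h1 h4
  have h6 := hval 1 one_ne_zero (by simp) (fun τ => by simp)
  have h7 : Ideal.span {(δ : 𝓞 F)} = Ideal.span {(1 : 𝓞 F)} := by
    rw [Ideal.span_singleton_one, Ideal.span_singleton_eq_top]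
    exact Units.isUnit δ
  rw [h7, h6] at h5
  simp only [map_one, one_zpow, Finset.prod_const_one] at h5
  have h8 : ∏ σ : F →+* ℂ, σ (algebraMap (𝓞 F) F ((δ : (𝓞 F)ˣ) : 𝓞 F)) ^ r σ = 1 := h5.symm
  rw [← h8]
  refine Finset.prod_congr rfl fun σ _ => ?_
  rw [hδ, Units.val_pow_eq_pow_val, map_pow, map_pow, zpow_mul, zpow_natCast]

end HeckeWeilAux

/-- (Weil) `r ∈ ℤ[Σ]` is realizable as the infinity type of an arithmetic Hecke character of a
number field `F` if and only if there is a positive integer `n` with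
`∏_σ σ(ε)^{n r_σ} = 1` for every unit `ε` of `𝓞 F`. -/
theorem isInfinityType_iff_units_pow
    (F : Type*) [Field F] [NumberField F] (r : (F →+* ℂ) → ℤ) :
    IsInfinityType F r ↔
      ∃ n : ℕ, 0 < n ∧ ∀ ε : (𝓞 F)ˣ,
        ∏ σ : F →+* ℂ, σ (algebraMap (𝓞 F) F (ε : 𝓞 F)) ^ ((n : ℤ) * r σ) = 1 := by
  constructor
  · exact HeckeWeilAux.forward r
  · rintro ⟨n, hn, h⟩
    exact HeckeWeilAux.backward r hn h
end

section
/- If F is an imaginary quadratic field, then every pair (r,s) ∈ Z² can be realized as the infinity type of an arithmetic Hecke character of F (with respect to the two complex embeddings). -/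
open NumberField

universe u

noncomputable def Complex.abs : AbsoluteValue ℂ ℝ := NormedField.toAbsoluteValue ℂ

lemma Complex.abs_apply (z : ℂ) : Complex.abs z = ‖z‖ := rfl

lemma Complex.abs_conj (z : ℂ) : Complex.abs ((starRingEnd ℂ) z) = Complex.abs z := by
  simp [Complex.abs_apply]

lemma Complex.abs_ofReal (x : ℝ) : Complex.abs (x : ℂ) = |x| := by
  simp [Complex.abs_apply]

@[simp]
lemma Complex.abs_ofNat (n : ℕ) [n.AtLeastTwo] : Complex.abs (OfNat.ofNat n : ℂ) = OfNat.ofNat n := by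
  simp [Complex.abs_apply]

noncomputable instance : DivisibleBy (Additive ℂˣ) ℤ where
  div a n := if hn : n = 0 then 0 else
    Additive.ofMul (Units.mk0 (Complex.exp (Complex.log ((Additive.toMul a : ℂˣ) : ℂ) / n))
      (Complex.exp_ne_zero _))
  div_zero a := dif_pos rfl
  div_cancel {n} a hn := by
    simp only [dif_neg hn]
    apply Additive.toMul.injective
    rw [toMul_zsmul]
    apply Units.ext
    rw [Units.val_zpow_eq_zpow_val]
    simp only [toMul_ofMul, Units.val_mk0]
    rw [← Complex.exp_int_mul, mul_div_cancel₀ _ (by exact_mod_cast hn : (n : ℂ) ≠ 0),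
      Complex.exp_log (Units.ne_zero _)]

lemma exists_extension {H : Type u} {G : Type u} [CommGroup H] [CommGroup G]
    (ι : H →* G) (hι : Function.Injective ι) (v : H →* ℂˣ) :
    ∃ χ : G →* ℂˣ, ∀ x, χ (ι x) = v x := by
  let J : AddCommGrpCat.{u} := AddCommGrpCat.of (ULift.{u} (Additive ℂˣ))
  haveI : CategoryTheory.Injective J := AddCommGrpCat.injective_of_divisible _
  let up : Additive ℂˣ →+ ULift.{u} (Additive ℂˣ) := AddEquiv.ulift.symm.toAddMonoidHom
  let down : ULift.{u} (Additive ℂˣ) →+ Additive ℂˣ := AddEquiv.ulift.toAddMonoidHom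
  let g : AddCommGrpCat.of (Additive H) ⟶ J := AddCommGrpCat.ofHom (up.comp (MonoidHom.toAdditive v))
  let i : AddCommGrpCat.of (Additive H) ⟶ AddCommGrpCat.of (Additive G) :=
    AddCommGrpCat.ofHom (MonoidHom.toAdditive ι)
  haveI : CategoryTheory.Mono i := (AddCommGrpCat.mono_iff_injective _).mpr (by exact hι)
  obtain ⟨h, hh⟩ := CategoryTheory.Injective.factors g i
  refine ⟨MonoidHom.toAdditive.symm (down.comp h.hom), ?_⟩
  intro x
  have := congrArg (fun (k : AddCommGrpCat.of (Additive H) ⟶ J) => down (k (Additive.ofMul x))) hh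
  exact this


section NT
variable {F : Type u} [Field F] [NumberField F]

lemma prod_abs (x : F) : ∏ φ : F →+* ℂ, Complex.abs (φ x) = |Algebra.norm ℚ x| := by
  have h := congrArg Complex.abs (Algebra.norm_eq_prod_embeddings ℚ ℂ (x := x))
  rw [map_prod] at h
  rw [Fintype.prod_equiv (RingHom.equivRatAlgHom F ℂ) (fun φ => Complex.abs (φ x))
      (fun f => Complex.abs (f x)) (fun _ => by simp [RingHom.equivRatAlgHom_apply])]
  rw [← h, eq_ratCast]
  rw [show ((|Algebra.norm ℚ x| : ℚ) : ℝ) = |((Algebra.norm ℚ x : ℚ) : ℝ)| by push_cast; ring]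
  rw [show ((Algebra.norm ℚ x : ℚ) : ℂ) = (((Algebra.norm ℚ x : ℚ) : ℝ) : ℂ) by push_cast; ring]
  exact Complex.abs_ofReal _


variable (hdeg : Module.finrank ℚ F = 2)
    (him : ∀ σ : F →+* ℂ, ¬ ComplexEmbedding.IsReal σ)

include hdeg him

open scoped Classical in

lemma absSq (σ : F →+* ℂ) (x : F) :
    Complex.abs (σ x) * Complex.abs (σ x) = |Algebra.norm ℚ x| := by
  have hne : σ ≠ ComplexEmbedding.conjugate σ := by
    intro h
    exact him σ (ComplexEmbedding.isReal_iff.mpr h.symm)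
  have hcard : Fintype.card (F →+* ℂ) = 2 := by
    rw [Embeddings.card F ℂ, hdeg]
  have huniv : (Finset.univ : Finset (F →+* ℂ)) = {σ, ComplexEmbedding.conjugate σ} := by
    refine (Finset.eq_of_subset_of_card_le (Finset.subset_univ _) ?_).symm
    rw [Finset.card_univ, hcard, Finset.card_insert_of_notMem (by simpa using hne),
      Finset.card_singleton]
  have := prod_abs (F := F) x
  rw [huniv, Finset.prod_pair hne] at this
  rw [ComplexEmbedding.conjugate_coe_eq, Complex.abs_conj] at this
  linarith [this]

lemma one_le_abs (z : 𝓞 F) (hz : z ≠ 0) (σ : F →+* ℂ) :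
    1 ≤ Complex.abs (σ (algebraMap (𝓞 F) F z)) := by
  have h1 : Algebra.norm ℚ (algebraMap (𝓞 F) F z) ≠ 0 := by
    rw [Algebra.norm_ne_zero_iff]
    exact fun h => hz (by
      apply (IsFractionRing.injective (𝓞 F) F)
      rw [h, map_zero])
  have h2 : 1 ≤ |Algebra.norm ℚ (algebraMap (𝓞 F) F z)| := by
    rw [← Algebra.coe_norm_int]
    have : Algebra.norm ℤ z ≠ 0 := by
      intro h
      apply h1
      rw [← Algebra.coe_norm_int, h]; simp
    rw [show |((Algebra.norm ℤ z : ℤ) : ℚ)| = ((|Algebra.norm ℤ z| : ℤ) : ℚ) by push_cast; ring]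
    exact_mod_cast Int.one_le_abs this
  have h3 := absSq hdeg him σ (algebraMap (𝓞 F) F z)
  nlinarith [AbsoluteValue.nonneg Complex.abs (σ (algebraMap (𝓞 F) F z)),
    (by exact_mod_cast h2 : (1:ℝ) ≤ ((|Algebra.norm ℚ (algebraMap (𝓞 F) F z)| : ℚ) : ℝ))]

lemma abs_unit_eq_one (ε : (𝓞 F)ˣ) (σ : F →+* ℂ) :
    Complex.abs (σ (algebraMap (𝓞 F) F ε)) = 1 := by
  have h1 := one_le_abs hdeg him (ε : 𝓞 F) (Units.ne_zero ε) σ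
  have h2 := one_le_abs hdeg him ((ε⁻¹ : (𝓞 F)ˣ) : 𝓞 F) (Units.ne_zero _) σ
  have h3 : Complex.abs (σ (algebraMap (𝓞 F) F ε)) *
      Complex.abs (σ (algebraMap (𝓞 F) F (ε⁻¹ : (𝓞 F)ˣ))) = 1 := by
    rw [← map_mul, ← map_mul, ← map_mul]
    simp
  nlinarith

lemma unit_eq_one (ε : (𝓞 F)ˣ) (δ : 𝓞 F) (hδ : (ε : 𝓞 F) - 1 = 3 * δ) : ε = 1 := by
  have hδ0 : δ = 0 := by
    by_contra h0
    obtain ⟨σ⟩ : Nonempty (F →+* ℂ) := by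
      apply Fintype.card_pos_iff.mp
      rw [Embeddings.card F ℂ, hdeg]; norm_num
    have h1 := one_le_abs hdeg him δ h0 σ
    have h2 := abs_unit_eq_one hdeg him ε σ
    have h3 : algebraMap (𝓞 F) F (ε : 𝓞 F) = 1 + 3 * algebraMap (𝓞 F) F δ := by
      have : (ε : 𝓞 F) = 1 + 3 * δ := by linear_combination hδ
      rw [this, map_add, map_mul, map_one, map_ofNat]
    have h4 : Complex.abs (σ (algebraMap (𝓞 F) F (ε : 𝓞 F)) - 1) ≤ 2 := by
      calc Complex.abs (σ (algebraMap (𝓞 F) F (ε : 𝓞 F)) - 1)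
          ≤ Complex.abs (σ (algebraMap (𝓞 F) F (ε : 𝓞 F))) + Complex.abs 1 := by
            have := Complex.abs.sub_le_add (σ (algebraMap (𝓞 F) F (ε : 𝓞 F))) 1
            simpa using this
        _ = 2 := by rw [h2]; simp; norm_num
    have h5 : σ (algebraMap (𝓞 F) F (ε : 𝓞 F)) - 1 = 3 * σ (algebraMap (𝓞 F) F δ) := by
      rw [h3]; push_cast [map_add, map_mul, map_one]
      rw [map_ofNat]; ring
    rw [h5] at h4
    rw [map_mul] at h4
    rw [show Complex.abs 3 = 3 by simpa using Complex.abs_ofNat 3] at h4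
    nlinarith
  apply Units.ext
  have : (ε : 𝓞 F) - 1 = 0 := by rw [hδ, hδ0, mul_zero]
  simpa using sub_eq_zero.mp this


end NT


section Main
open scoped nonZeroDivisors
variable (F : Type u) [Field F] [NumberField F]

lemma algebraMap_ne_zero' {z : 𝓞 F} (hz : z ≠ 0) : algebraMap (𝓞 F) F z ≠ 0 :=
  fun h => hz (IsFractionRing.injective (𝓞 F) F (by rw [h, map_zero]))

/-- The subgroup of `Fˣ` of quotients of algebraic integers congruent to 1 mod 3. -/
def Bsub : Subgroup Fˣ where
  carrier := {u | ∃ α β : 𝓞 F, α - 1 ∈ Ideal.span {(3 : 𝓞 F)} ∧ β - 1 ∈ Ideal.span {(3 : 𝓞 F)}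
    ∧ β ≠ 0 ∧ (u : F) * algebraMap (𝓞 F) F β = algebraMap (𝓞 F) F α}
  one_mem' := ⟨1, 1, by simp, by simp, one_ne_zero, by simp⟩
  mul_mem' := by
    rintro a b ⟨α, β, h1, h2, h3, h4⟩ ⟨α', β', h1', h2', h3', h4'⟩
    refine ⟨α * α', β * β', ?_, ?_, mul_ne_zero h3 h3', ?_⟩
    · have : α * α' - 1 = α * (α' - 1) + (α - 1) := by ring
      rw [this]
      exact Ideal.add_mem _ (Ideal.mul_mem_left _ _ h1') h1
    · have : β * β' - 1 = β * (β' - 1) + (β - 1) := by ring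
      rw [this]
      exact Ideal.add_mem _ (Ideal.mul_mem_left _ _ h2') h2
    · rw [map_mul, map_mul, Units.val_mul]
      calc (a : F) * b * (algebraMap (𝓞 F) F β * algebraMap (𝓞 F) F β')
          = ((a : F) * algebraMap (𝓞 F) F β) * ((b : F) * algebraMap (𝓞 F) F β') := by ring
        _ = _ := by rw [h4, h4']
  inv_mem' := by
    rintro a ⟨α, β, h1, h2, h3, h4⟩
    have hα0 : α ≠ 0 := by
      intro h
      rw [h, map_zero] at h4
      have hb : algebraMap (𝓞 F) F β = 0 := by
        rcases mul_eq_zero.mp h4 with h' | h'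
        · exact absurd h' (Units.ne_zero a)
        · exact h'
      exact h3 (IsFractionRing.injective (𝓞 F) F (by rw [hb, map_zero]))
    refine ⟨β, α, h2, h1, hα0, ?_⟩
    have ha : (a : F) ≠ 0 := Units.ne_zero a
    rw [← h4]
    rw [Units.val_inv_eq_inv_val]
    field_simp
  


noncomputable def vhom (r : (F →+* ℂ) → ℤ) : Fˣ →* ℂˣ where
  toFun u := ∏ σ : F →+* ℂ, (Units.map (σ : F →* ℂ) u) ^ (r σ)
  map_one' := by simp
  map_mul' x y := by
    simp only [map_mul, mul_zpow]
    rw [Finset.prod_mul_distrib]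

lemma vhom_coe (r : (F →+* ℂ) → ℤ) (u : Fˣ) :
    ((vhom F r u : ℂˣ) : ℂ) = ∏ σ : F →+* ℂ, (σ (u : F)) ^ (r σ) := by
  show (Units.coeHom ℂ) (∏ σ : F →+* ℂ, (Units.map (σ : F →* ℂ) u) ^ (r σ)) = _
  rw [map_prod]
  refine Finset.prod_congr rfl fun σ _ => ?_
  simp

noncomputable def unitOf (I : Ideal (𝓞 F)) (hI : I ≠ ⊥) : (FractionalIdeal (𝓞 F)⁰ F)ˣ :=
  Units.mkOfMulEqOne _ _
    (mul_inv_cancel₀ (a := (I : FractionalIdeal (𝓞 F)⁰ F))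
      (by rwa [Ne, FractionalIdeal.coeIdeal_eq_zero]))

lemma unitOf_val (I : Ideal (𝓞 F)) (hI : I ≠ ⊥) :
    (unitOf F I hI : FractionalIdeal (𝓞 F)⁰ F) = I := rfl

lemma theta_injective (hdeg : Module.finrank ℚ F = 2)
    (him : ∀ σ : F →+* ℂ, ¬ ComplexEmbedding.IsReal σ) :
    Function.Injective ((toPrincipalIdeal (𝓞 F) F).comp (Bsub F).subtype) := by
  rw [injective_iff_map_eq_one]
  rintro ⟨x, α, β, h1, h2, h3, h4⟩ hx1
  have hspan : FractionalIdeal.spanSingleton (𝓞 F)⁰ ((x : Fˣ) : F) = 1 := by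
    rw [← coe_toPrincipalIdeal]
    exact congrArg Units.val hx1
  have hαβ : Ideal.span {α} = Ideal.span {β} := by
    rw [← FractionalIdeal.coeIdeal_inj (K := F)]
    rw [FractionalIdeal.coeIdeal_span_singleton, FractionalIdeal.coeIdeal_span_singleton]
    rw [← h4, ← FractionalIdeal.spanSingleton_mul_spanSingleton, hspan, one_mul]
  obtain ⟨ε, hε⟩ := (Ideal.span_singleton_eq_span_singleton).mp hαβ
  obtain ⟨aa, ha⟩ := Ideal.mem_span_singleton.mp h1
  obtain ⟨bb, hb⟩ := Ideal.mem_span_singleton.mp h2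
  have hε1 : ε = 1 := by
    refine unit_eq_one hdeg him ε (bb - aa - aa * ((ε : 𝓞 F) - 1)) ?_
    linear_combination hε - (ε : 𝓞 F) * ha + hb
  rw [hε1, Units.val_one, mul_one] at hε
  rw [← hε] at h4 h3
  have hx : ((x : Fˣ) : F) = 1 :=
    mul_right_cancel₀ (algebraMap_ne_zero' F h3) (h4.trans (one_mul _).symm)
  ext
  exact hx

lemma not_isUnit_three (hdeg : Module.finrank ℚ F = 2)
    (him : ∀ σ : F →+* ℂ, ¬ ComplexEmbedding.IsReal σ) : ¬ IsUnit (3 : 𝓞 F) := by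
  intro h
  obtain ⟨σ⟩ : Nonempty (F →+* ℂ) := by
    apply Fintype.card_pos_iff.mp
    rw [Embeddings.card F ℂ, hdeg]; norm_num
  have h2 := abs_unit_eq_one hdeg him h.unit σ
  rw [show ((h.unit : (𝓞 F)ˣ) : 𝓞 F) = 3 from rfl] at h2
  rw [map_ofNat, map_ofNat] at h2
  norm_num [Complex.abs_apply] at h2

end Main
/-- If `F` is an imaginary quadratic field, every `r ∈ ℤ[Σ]` (i.e. every pair `(r, s) ∈ ℤ²`,
indexed by the two complex embeddings) is the infinity type of an arithmetic Hecke character. -/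
theorem isInfinityType_of_imaginaryQuadratic
    (F : Type*) [Field F] [NumberField F]
    (hdeg : Module.finrank ℚ F = 2)
    (him : ∀ σ : F →+* ℂ, ¬ ComplexEmbedding.IsReal σ) :
    ∀ r : (F →+* ℂ) → ℤ, IsInfinityType F r := by
  intro r
  classical
  have h3ne : (3 : 𝓞 F) ≠ 0 := by
    intro h
    have h' : ((3 : ℤ) : 𝓞 F) = 0 := by exact_mod_cast h
    rw [Int.cast_eq_zero] at h'
    norm_num at h'
  set f : Ideal (𝓞 F) := Ideal.span {(3 : 𝓞 F)} with hf
  have hfbot : f ≠ ⊥ := by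
    rw [hf, Ne, Ideal.span_singleton_eq_bot]
    exact h3ne
  have hftop : f ≠ ⊤ := by
    rw [hf, Ne, Ideal.span_singleton_eq_top]
    exact not_isUnit_three F hdeg him
  have cop_ne_bot : ∀ I : Ideal (𝓞 F), IsCoprime I f → I ≠ ⊥ := by
    intro I hc hbot
    rw [hbot] at hc
    rw [← Ideal.zero_eq_bot] at hc
    exact hftop (Ideal.isUnit_iff.mp (isCoprime_zero_left.mp hc))
  obtain ⟨χ, hχ⟩ := exists_extension ((toPrincipalIdeal (𝓞 F) F).comp (Bsub F).subtype)
    (theta_injective F hdeg him) ((vhom F r).comp (Bsub F).subtype)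
  refine ⟨f, hfbot,
    fun I => if h : IsCoprime I f then ((χ (unitOf F I (cop_ne_bot I h)) : ℂˣ) : ℂ) else 0,
    ?_, ?_, ?_⟩
  · intro I J hI hJ
    have hIJ : IsCoprime (I * J) f := hI.mul_left hJ
    simp only [dif_pos hI, dif_pos hJ, dif_pos hIJ]
    have huv : unitOf F (I * J) (cop_ne_bot _ hIJ)
        = unitOf F I (cop_ne_bot _ hI) * unitOf F J (cop_ne_bot _ hJ) := by
      apply Units.ext
      rw [Units.val_mul, unitOf_val, unitOf_val, unitOf_val, FractionalIdeal.coeIdeal_mul]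
    rw [huv, map_mul, Units.val_mul]
  · intro I hI
    simp only [dif_pos hI]
    exact Units.ne_zero _
  · intro α hα0 hαf _
    have hcop : IsCoprime (Ideal.span {α}) f := by
      refine ⟨1, 1, ?_⟩
      rw [one_mul, one_mul, Ideal.one_eq_top, Submodule.add_eq_sup, Ideal.eq_top_iff_one]
      refine Submodule.mem_sup.mpr ⟨α, Ideal.subset_span rfl, 1 - α, ?_, by ring⟩
      rw [show (1 : 𝓞 F) - α = -(α - 1) by ring]
      exact neg_mem hαf
    simp only [dif_pos hcop]
    have hu0 : algebraMap (𝓞 F) F α ≠ 0 := algebraMap_ne_zero' F hα0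
    set uα : Fˣ := Units.mk0 _ hu0 with huα
    have hmem : uα ∈ Bsub F := ⟨α, 1, hαf, by simp, one_ne_zero, by rw [huα]; simp⟩
    have hkey : unitOf F (Ideal.span {α}) (cop_ne_bot _ hcop)
        = ((toPrincipalIdeal (𝓞 F) F).comp (Bsub F).subtype) ⟨uα, hmem⟩ := by
      apply Units.ext
      rw [unitOf_val, MonoidHom.comp_apply, coe_toPrincipalIdeal,
        FractionalIdeal.coeIdeal_span_singleton]
      rfl
    rw [hkey, hχ ⟨uα, hmem⟩]
    exact vhom_coe F r uα
end

section
/- Let φ be a Hecke character of F of conductor f, and let p be a prime ideal of O_F not dividing f. Let B ⊂ O_F be a complete set of representatives for the residues b mod fp whose reduction mod f lies in (O_F/f)^×. Then for nonzero ζ ∈ O_F, the modified Gauss sum φ(d^{-1}) Σ_{b∈B} φ_f(b) e_F(ζ b d^{-1}(π_f^{-1}π_p^{-1})_{v|fp}) equals N(p)·φ_f(ζ)^{-1}τ(φ) if (ζ) is coprime to f and p divides (ζ), and equals 0 otherwise. -/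
set_option synthInstance.maxHeartbeats 1000000
set_option maxHeartbeats 1000000

open NumberField

/-- `χ` is a primitive multiplicative character of conductor `f`. -/
def IsPrimitiveMulChar {F : Type*} [Field F] [NumberField F]
    (f : Ideal (𝓞 F)) (χ : MulChar (𝓞 F ⧸ f) ℂ) : Prop :=
  ∀ g : Ideal (𝓞 F), f < g →
    ∃ b : 𝓞 F, IsUnit (Ideal.Quotient.mk f b) ∧ b - 1 ∈ g ∧ χ (Ideal.Quotient.mk f b) ≠ 1

/-- A nondegenerate (primitive) additive character. -/
def IsPrimitiveAddChar {F : Type*} [Field F] [NumberField F]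
    (f : Ideal (𝓞 F)) (ψ : AddChar (𝓞 F ⧸ f) ℂ) : Prop :=
  ∀ a : 𝓞 F ⧸ f, a ≠ 0 → ∃ x : 𝓞 F ⧸ f, ψ (a * x) ≠ 1

open Finset in
private lemma sum_ite_isUnit {R M : Type*} [Monoid R] [Fintype R] [DecidableEq R]
    [AddCommMonoid M] [DecidablePred (IsUnit : R → Prop)] (G : R → M) :
    (∑ a : R, if IsUnit a then G a else 0) = ∑ u : Rˣ, G ↑u := by
  classical
  rw [Finset.sum_ite, Finset.sum_const_zero, add_zero]
  have himg : Finset.univ.filter (fun a : R => IsUnit a) =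
      Finset.univ.image (fun u : Rˣ => (u : R)) := by
    ext a
    exact Finset.mem_filter.trans ⟨fun h => Finset.mem_image.mpr (let ⟨u, hu⟩ := h.2; ⟨u, Finset.mem_univ _, hu⟩),
      fun h => ⟨Finset.mem_univ _, let ⟨u, _, hu⟩ := Finset.mem_image.mp h; ⟨u, hu⟩⟩⟩
  rw [himg, Finset.sum_image (fun u _ v _ h => Units.ext h)]


set_option maxHeartbeats 16000000 in
/-- The modified Gauss sum at level `f·p`, for a prime `p` not dividing the conductor `f`.

Here `χ = φ_f` is the primitive multiplicative character mod `f` of the Hecke character `φ`,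
`ψ = e_F(· d⁻¹ (π_f⁻¹)_{v∣f})` is the primitive additive character mod `f` (so that
`τ(φ) = c ∑_b χ(b) ψ(b)` with `c = φ(d⁻¹)`), `ψp` is the primitive additive character
`e_F(· d⁻¹ π_p⁻¹)` mod `p`, and `ψ' = e_F(· d⁻¹ (π_f⁻¹ π_p⁻¹)_{v∣fp})` is the additive character
mod `f·p`, which factors as `ψ'(b) = ψ(b) ψp(b)`.  Summing over representatives `b mod f·p`
whose reduction mod `f` is a unit:
`c ∑_b χ(b mod f) ψ'(ζ b) = N(p) χ(ζ)⁻¹ τ(φ)` if `(ζ)` is coprime to `f` and `p ∣ (ζ)`,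
and `= 0` otherwise. -/
theorem modified_gaussSum
    {F : Type*} [Field F] [NumberField F]
    (f p : Ideal (𝓞 F)) (hp : p.IsPrime) (hpf : ¬ p ∣ f)
    [Fintype (𝓞 F ⧸ f)] [Fintype (𝓞 F ⧸ (f * p))] [Fintype (𝓞 F ⧸ p)]
    (χ : MulChar (𝓞 F ⧸ f) ℂ) (hχ : IsPrimitiveMulChar f χ)
    (ψ : AddChar (𝓞 F ⧸ f) ℂ) (hψ : IsPrimitiveAddChar f ψ)
    (ψp : AddChar (𝓞 F ⧸ p) ℂ) (hψp : IsPrimitiveAddChar p ψp)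
    (ψ' : AddChar (𝓞 F ⧸ (f * p)) ℂ)
    (hfact : ∀ b : 𝓞 F,
      ψ' (Ideal.Quotient.mk (f * p) b) =
        ψ (Ideal.Quotient.mk f b) * ψp (Ideal.Quotient.mk p b))
    [DecidableEq (𝓞 F ⧸ f)]
    (c : ℂ) (ζ : 𝓞 F) (hζ : ζ ≠ 0) :
    (IsCoprime (Ideal.span {ζ}) f ∧ ζ ∈ p →
      c * (∑ᶠ (b : 𝓞 F ⧸ (f * p))
            (_ : IsUnit (Ideal.Quotient.factor (Ideal.mul_le_inf.trans inf_le_left : f * p ≤ f) b)),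
          χ (Ideal.Quotient.factor (Ideal.mul_le_inf.trans inf_le_left : f * p ≤ f) b) *
            ψ' (Ideal.Quotient.mk (f * p) ζ * b)) =
        (Ideal.absNorm p : ℂ) * (χ (Ideal.Quotient.mk f ζ))⁻¹ *
          (c * ∑ b : (𝓞 F ⧸ f)ˣ, χ b * ψ b)) ∧
    (¬ (IsCoprime (Ideal.span {ζ}) f ∧ ζ ∈ p) →
      c * (∑ᶠ (b : 𝓞 F ⧸ (f * p))
            (_ : IsUnit (Ideal.Quotient.factor (Ideal.mul_le_inf.trans inf_le_left : f * p ≤ f) b)),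
          χ (Ideal.Quotient.factor (Ideal.mul_le_inf.trans inf_le_left : f * p ≤ f) b) *
            ψ' (Ideal.Quotient.mk (f * p) ζ * b)) = 0) := by
  classical
  have hfbot : f ≠ ⊥ := by
    intro h
    have hinj : Function.Injective (Ideal.Quotient.mk f) := by
      intro a b hab
      have h2 := Ideal.Quotient.eq.mp hab
      rw [h, Ideal.mem_bot, sub_eq_zero] at h2
      exact h2
    have : Finite (𝓞 F) := Finite.of_injective _ hinj
    exact not_finite (𝓞 F)
  have hpbot : p ≠ ⊥ := by
    intro h
    have hinj : Function.Injective (Ideal.Quotient.mk p) := by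
      intro a b hab
      have h2 := Ideal.Quotient.eq.mp hab
      rw [h, Ideal.mem_bot, sub_eq_zero] at h2
      exact h2
    have : Finite (𝓞 F) := Finite.of_injective _ hinj
    exact not_finite (𝓞 F)
  have hpmax : p.IsMaximal := hp.isMaximal hpbot
  have hcop : IsCoprime f p := by
    rw [Ideal.isCoprime_iff_sup_eq]
    by_contra h
    have h2 := hpmax.eq_of_le h le_sup_right
    exact hpf (Ideal.dvd_iff_le.mpr (le_sup_left.trans h2.ge))
  -- splitting the sum
  have hsum :
      (∑ᶠ (b : 𝓞 F ⧸ (f * p))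
            (_ : IsUnit (Ideal.Quotient.factor (Ideal.mul_le_inf.trans inf_le_left : f * p ≤ f) b)),
          χ (Ideal.Quotient.factor (Ideal.mul_le_inf.trans inf_le_left : f * p ≤ f) b) *
            ψ' (Ideal.Quotient.mk (f * p) ζ * b)) =
      (∑ a : 𝓞 F ⧸ f, if IsUnit a then χ a * ψ (Ideal.Quotient.mk f ζ * a) else 0) *
      (∑ b : 𝓞 F ⧸ p, ψp (Ideal.Quotient.mk p ζ * b)) := by
    rw [finsum_cond_eq_sum_of_cond_iff _
      (t := Finset.univ.filter fun b : 𝓞 F ⧸ (f * p) =>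
        IsUnit (Ideal.Quotient.factor (Ideal.mul_le_inf.trans inf_le_left : f * p ≤ f) b))
      (fun {x} _ => by simp)]
    rw [Finset.sum_filter]
    rw [Fintype.sum_bijective (Ideal.quotientMulEquivQuotientProd f p hcop)
      (Ideal.quotientMulEquivQuotientProd f p hcop).toEquiv.bijective _
      (fun y : (𝓞 F ⧸ f) × (𝓞 F ⧸ p) =>
        (if IsUnit y.1 then χ y.1 * ψ (Ideal.Quotient.mk f ζ * y.1) else 0) *
          ψp (Ideal.Quotient.mk p ζ * y.2)) ?_]
    · rw [Fintype.sum_prod_type, Finset.sum_mul_sum]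
    · intro b
      obtain ⟨x, rfl⟩ := Ideal.Quotient.mk_surjective b
      simp only [Ideal.quotientMulEquivQuotientProd_fst,
        Ideal.quotientMulEquivQuotientProd_snd, Ideal.Quotient.factor_mk]
      rw [← map_mul (Ideal.Quotient.mk (f * p)), hfact, map_mul (Ideal.Quotient.mk f),
        map_mul (Ideal.Quotient.mk p)]
      by_cases hu : IsUnit (Ideal.Quotient.mk f x)
      · rw [if_pos hu]
        exact (if_pos hu).trans (by ring)
      · rw [if_neg hu, zero_mul]
        exact if_neg hu
  -- convert the unit-filtered sum into a sum over units
  have hT : (∑ a : 𝓞 F ⧸ f, if IsUnit a then χ a * ψ (Ideal.Quotient.mk f ζ * a) else 0) =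
      ∑ u : (𝓞 F ⧸ f)ˣ, χ ↑u * ψ (Ideal.Quotient.mk f ζ * ↑u) :=
    sum_ite_isUnit _
  -- the p-part
  have hS2card : ζ ∈ p →
      (∑ b : 𝓞 F ⧸ p, ψp (Ideal.Quotient.mk p ζ * b)) = (Ideal.absNorm p : ℂ) := by
    intro h
    have hz0 : Ideal.Quotient.mk p ζ = 0 := Ideal.Quotient.eq_zero_iff_mem.mpr h
    calc (∑ b : 𝓞 F ⧸ p, ψp (Ideal.Quotient.mk p ζ * b))
        = ∑ _b : 𝓞 F ⧸ p, (1 : ℂ) :=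
          Finset.sum_congr rfl fun b _ => by rw [hz0, zero_mul, AddChar.map_zero_eq_one]
      _ = (Fintype.card (𝓞 F ⧸ p) : ℂ) := by
          rw [Finset.sum_const, Finset.card_univ, nsmul_eq_mul, mul_one]
      _ = (Ideal.absNorm p : ℂ) := by
          rw [Ideal.absNorm_apply, Submodule.cardQuot_apply, Nat.card_eq_fintype_card]
  have hS2zero : ζ ∉ p →
      (∑ b : 𝓞 F ⧸ p, ψp (Ideal.Quotient.mk p ζ * b)) = 0 := by
    intro h
    have hz0 : Ideal.Quotient.mk p ζ ≠ 0 :=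
      fun h0 => h (Ideal.Quotient.eq_zero_iff_mem.mp h0)
    obtain ⟨x, hx⟩ := hψp _ hz0
    have hne : AddChar.mulShift ψp (Ideal.Quotient.mk p ζ) ≠ 1 := by
      intro h1
      apply hx
      rw [← AddChar.mulShift_apply, h1, AddChar.one_apply]
    have hzero := AddChar.sum_eq_zero_of_ne_one hne
    rw [← hzero]
    exact Finset.sum_congr rfl fun b _ => (AddChar.mulShift_apply).symm
  -- the f-part, unit case
  have hS1unit : IsUnit (Ideal.Quotient.mk f ζ) →
      (∑ u : (𝓞 F ⧸ f)ˣ, χ ↑u * ψ (Ideal.Quotient.mk f ζ * ↑u)) =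
        (χ (Ideal.Quotient.mk f ζ))⁻¹ * ∑ u : (𝓞 F ⧸ f)ˣ, χ ↑u * ψ ↑u := by
    intro hz
    set zu := hz.unit with hzu_def
    have hzu : (↑zu : 𝓞 F ⧸ f) = Ideal.Quotient.mk f ζ := hz.unit_spec
    have hinv : χ ↑(zu⁻¹ : (𝓞 F ⧸ f)ˣ) = (χ (Ideal.Quotient.mk f ζ))⁻¹ := by
      refine eq_inv_of_mul_eq_one_left ?_
      rw [← hzu, ← map_mul, ← Units.val_mul, inv_mul_cancel, Units.val_one, map_one]
    have h1 : (χ (Ideal.Quotient.mk f ζ))⁻¹ * χ (Ideal.Quotient.mk f ζ) = 1 := by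
      rw [← hinv, ← hzu, ← map_mul, ← Units.val_mul, inv_mul_cancel, Units.val_one, map_one]
    rw [Fintype.sum_equiv (Equiv.mulLeft zu)
      (fun u : (𝓞 F ⧸ f)ˣ => χ ↑u * ψ (Ideal.Quotient.mk f ζ * ↑u))
      (fun v : (𝓞 F ⧸ f)ˣ => (χ (Ideal.Quotient.mk f ζ))⁻¹ * (χ ↑v * ψ ↑v)) ?_,
      ← Finset.mul_sum]
    intro u
    dsimp only [Equiv.coe_mulLeft]
    have hval : ((zu * u : (𝓞 F ⧸ f)ˣ) : 𝓞 F ⧸ f) = Ideal.Quotient.mk f ζ * ↑u := by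
      rw [Units.val_mul, hzu]
    rw [hval, map_mul χ]
    calc χ ↑u * ψ (Ideal.Quotient.mk f ζ * ↑u)
        = ((χ (Ideal.Quotient.mk f ζ))⁻¹ * χ (Ideal.Quotient.mk f ζ)) *
            (χ ↑u * ψ (Ideal.Quotient.mk f ζ * ↑u)) := by rw [h1, one_mul]
      _ = (χ (Ideal.Quotient.mk f ζ))⁻¹ *
            (χ (Ideal.Quotient.mk f ζ) * χ ↑u * ψ (Ideal.Quotient.mk f ζ * ↑u)) := by ring
  -- ζ coprime to f ⇒ mk f ζ is a unit
  have hunit : IsCoprime (Ideal.span {ζ}) f → IsUnit (Ideal.Quotient.mk f ζ) := by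
    intro hc
    rw [Ideal.isCoprime_iff_sup_eq] at hc
    have h1 : (1 : 𝓞 F) ∈ Ideal.span {ζ} ⊔ f := hc ▸ Submodule.mem_top
    obtain ⟨x, hx, y, hy, hxy⟩ := Submodule.mem_sup.mp h1
    obtain ⟨t, ht⟩ := Ideal.mem_span_singleton'.mp hx
    refine IsUnit.of_mul_eq_one (Ideal.Quotient.mk f t) ?_
    rw [← map_mul, show (1 : 𝓞 F ⧸ f) = Ideal.Quotient.mk f 1 from rfl, Ideal.Quotient.eq]
    have : ζ * t - 1 = -y := by rw [← hxy, ← ht]; ring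
    rw [this]
    exact neg_mem hy
  -- the f-part, non-coprime case
  have hS1zero : ¬ IsCoprime (Ideal.span {ζ}) f →
      (∑ u : (𝓞 F ⧸ f)ˣ, χ ↑u * ψ (Ideal.Quotient.mk f ζ * ↑u)) = 0 := by
    intro hnc
    have hne : Ideal.span {ζ} ⊔ f ≠ ⊤ := fun h => hnc (Ideal.isCoprime_iff_sup_eq.mpr h)
    obtain ⟨q, hqmax, hle⟩ := Ideal.exists_le_maximal _ hne
    obtain ⟨f', hf'⟩ := Ideal.dvd_iff_le.mpr (le_sup_right.trans hle : f ≤ q)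
    have hf'0 : f' ≠ ⊥ := by
      rintro rfl
      rw [Ideal.mul_bot] at hf'
      exact hfbot hf'
    have hff' : f < f' := by
      refine lt_of_le_of_ne (hf' ▸ Ideal.mul_le_right) fun h => ?_
      have h3 : q * f' = ⊤ * f' := by rw [Ideal.top_mul, ← hf', h]
      have h4 : q = ⊤ := mul_right_cancel₀ (by simpa [Submodule.zero_eq_bot] using hf'0) h3
      exact hqmax.ne_top h4
    obtain ⟨u, huU, hu1, huχ⟩ := hχ f' hff'
    have hζq : ζ ∈ q := hle (Ideal.mem_sup_left (Ideal.mem_span_singleton_self ζ))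
    have hkey : Ideal.Quotient.mk f (ζ * u) = Ideal.Quotient.mk f ζ := by
      rw [Ideal.Quotient.eq]
      have h5 : ζ * u - ζ = ζ * (u - 1) := by ring
      rw [h5, hf']
      exact Ideal.mul_mem_mul hζq hu1
    have hzu : Ideal.Quotient.mk f ζ * Ideal.Quotient.mk f u = Ideal.Quotient.mk f ζ := by
      rw [← map_mul, hkey]
    set uu := huU.unit with huu_def
    have huuv : (↑uu : 𝓞 F ⧸ f) = Ideal.Quotient.mk f u := huU.unit_spec
    have h2 : (∑ v : (𝓞 F ⧸ f)ˣ, χ (Ideal.Quotient.mk f u) *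
          (χ ↑v * ψ (Ideal.Quotient.mk f ζ * ↑v))) =
        ∑ v : (𝓞 F ⧸ f)ˣ, χ ↑v * ψ (Ideal.Quotient.mk f ζ * ↑v) := by
      refine Fintype.sum_equiv (Equiv.mulLeft uu) _ _ fun v => ?_
      dsimp only [Equiv.coe_mulLeft]
      have hval : ((uu * v : (𝓞 F ⧸ f)ˣ) : 𝓞 F ⧸ f) = Ideal.Quotient.mk f u * ↑v := by
        rw [Units.val_mul, huuv]
      have harg : Ideal.Quotient.mk f ζ * (Ideal.Quotient.mk f u * ↑v) =
          Ideal.Quotient.mk f ζ * ↑v := by rw [← mul_assoc, hzu]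
      rw [hval, map_mul χ, harg]
      ring
    rw [← Finset.mul_sum] at h2
    have h3 : (χ (Ideal.Quotient.mk f u) - 1) *
        (∑ v : (𝓞 F ⧸ f)ˣ, χ ↑v * ψ (Ideal.Quotient.mk f ζ * ↑v)) = 0 := by
      rw [sub_mul, one_mul, h2, sub_self]
    rcases mul_eq_zero.mp h3 with h4 | h4
    · exact absurd (by linear_combination h4) huχ
    · exact h4
  constructor
  · rintro ⟨hc, hzp⟩
    rw [hsum, hT, hS1unit (hunit hc), hS2card hzp]
    ring
  · intro hn
    rw [hsum, hT]
    by_cases hzp : ζ ∈ p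
    · rw [hS1zero fun hc => hn ⟨hc, hzp⟩, zero_mul, mul_zero]
    · rw [hS2zero hzp, mul_zero, mul_zero]
end
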